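/- arXiv:1803.03880 — 2 statements merged into one kernel-verified Lean document; each statement's English description precedes it below -/
import Mathlib

section
/- With a sparsifying front end selecting support S(x) (assumed stable under perturbation, high SNR), the defended binary classifier's decision on x+e agrees with that on x whenever |wᵀ(Ψ H_S Ψᵀ x) − b| > ε‖P_{S(x)} w‖₁, where P_{S(x)} is the projection onto span{ψ_k : k ∈ S(x)}. In particular, if ‖P_{S(x)}w‖₁ < ‖w‖₁, the certified robustness radius strictly increases. -/
open Finset Matrix

lemma sign_add_of_abs_lt {A δ : ℝ} (h : |δ| < |A|) :
    Real.sign (A + δ) = Real.sign A := by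
  rcases lt_trichotomy A 0 with hA | hA | hA
  · rw [Real.sign_of_neg hA, Real.sign_of_neg]
    rw [abs_of_neg hA] at h
    cases abs_lt.mp h; linarith
  · simp [hA] at h; exact absurd h (abs_nonneg δ).not_gt
  · rw [Real.sign_of_pos hA, Real.sign_of_pos]
    rw [abs_of_pos hA] at h
    cases abs_lt.mp h; linarith

/-- with a sparsifying front end of stable support `S`, the
defended classifier's decision is unchanged by any `‖e‖_∞ ≤ ε` whenever
`|wᵀ f(x) − b| > ε‖P_S w‖₁`; moreover if `‖P_S w‖₁ < ‖w‖₁` the certified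
threshold strictly improves. -/
theorem stmt13 (N : ℕ) (Ψ : Matrix (Fin N) (Fin N) ℝ) (hΨ : Ψᵀ * Ψ = 1)
    (S : Finset (Fin N)) (w x : Fin N → ℝ) (b ε : ℝ) (hε : 0 < ε)
    (f : (Fin N → ℝ) → (Fin N → ℝ))
    (hf : ∀ z, f z = fun i => ∑ k ∈ S, Ψ i k * (∑ m, Ψ m k * z m))
    (Pw : Fin N → ℝ)
    (hPw : Pw = fun i => ∑ k ∈ S, Ψ i k * (∑ m, Ψ m k * w m)) :
    ((ε * ∑ i, |Pw i| < |∑ i, w i * f x i - b|) →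
      ∀ e : Fin N → ℝ, (∀ i, |e i| ≤ ε) →
        Real.sign (∑ i, w i * f (x + e) i - b)
          = Real.sign (∑ i, w i * f x i - b)) ∧
    ((∑ i, |Pw i| < ∑ i, |w i|) → ε * ∑ i, |Pw i| < ε * ∑ i, |w i|) := by
  constructor
  · intro hgap e he
    have key : (∑ i, w i * f (x + e) i - b)
        = (∑ i, w i * f x i - b) + ∑ m, e m * Pw m := by
      simp only [hf, hPw, Pi.add_apply]
      have : (∑ i, w i * ∑ k ∈ S, Ψ i k * ∑ m, Ψ m k * (x m + e m))
          = (∑ i, w i * ∑ k ∈ S, Ψ i k * ∑ m, Ψ m k * x m)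
            + ∑ m, e m * ∑ k ∈ S, Ψ m k * ∑ i, Ψ i k * w i := by
        simp only [mul_add, Finset.sum_add_distrib, Finset.mul_sum]
        congr 1
        rw [Finset.sum_comm]
        conv_rhs => rw [Finset.sum_comm]
        congr 1; ext k
        rw [Finset.sum_comm]
        congr 1; ext m
        congr 1; ext i
        ring
      rw [this]; ring
    rw [key]
    apply sign_add_of_abs_lt
    calc |∑ m, e m * Pw m| ≤ ∑ m, |e m * Pw m| := Finset.abs_sum_le_sum_abs _ _
      _ ≤ ∑ m, ε * |Pw m| := by
          apply Finset.sum_le_sum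
          intro m _
          rw [abs_mul]
          exact mul_le_mul_of_nonneg_right (he m) (abs_nonneg _)
      _ = ε * ∑ m, |Pw m| := by rw [Finset.mul_sum]
      _ < _ := hgap
  · intro h
    exact (mul_lt_mul_iff_right₀ hε).mpr h
end

section
/- Suppose c = Ψᵀx has exactly K nonzero entries with minimum magnitude λ, and let e satisfy ‖e‖_∞ ≤ ε with λ > 2εM, M = max_j ‖ψ_j‖₁. Then the reconstruction error of the front end obeys ‖ΨH_K(Ψᵀ(x+e)) − x‖₂ ≤ √K · εM. -/
open Finset Matrix

/-- if `c = Ψᵀx` has exactly `K` nonzeros of minimum magnitude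
`λ > 2εM` and `‖e‖_∞ ≤ ε`, then the front-end reconstruction error obeys
`‖Ψ H_K(Ψᵀ(x+e)) − x‖₂ ≤ √K · εM`. -/
theorem stmt18 (N K : ℕ) (Ψ : Matrix (Fin N) (Fin N) ℝ) (hΨ : Ψᵀ * Ψ = 1)
    (x : Fin N → ℝ) (c : Fin N → ℝ) (hc : c = Ψᵀ.mulVec x)
    (hsupp : Set.ncard {j | c j ≠ 0} = K)
    (lam M ε : ℝ) (hε : 0 < ε)
    (hlam : ∀ j, c j ≠ 0 → lam ≤ |c j|)
    (hM : ∀ j, ∑ i, |Ψ i j| ≤ M)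
    (hSNR : 2 * ε * M < lam)
    (e : Fin N → ℝ) (he : ∀ i, |e i| ≤ ε)
    (S : Finset (Fin N)) (hK : S.card = K)
    (htop : ∀ j ∈ S, ∀ i ∉ S, |Ψᵀ.mulVec (x + e) i| ≤ |Ψᵀ.mulVec (x + e) j|) :
    Real.sqrt (∑ i,
        (Ψ.mulVec (fun k => if k ∈ S then Ψᵀ.mulVec (x + e) k else 0) i - x i) ^ 2)
      ≤ Real.sqrt K * (ε * M) := by
  rcases Nat.eq_zero_or_pos N with hN | hN
  · haveI : IsEmpty (Fin N) := by rw [hN]; exact Fin.isEmpty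
    have hK0 : K = 0 := by
      have h := Finset.card_le_univ S
      rw [Fintype.card_fin] at h
      omega
    simp [hK0]
  -- main case
  set d : Fin N → ℝ := Ψᵀ.mulVec (x + e) with hd
  set n : Fin N → ℝ := Ψᵀ.mulVec e with hn
  have hΨΨt : Ψ * Ψᵀ = 1 := mul_eq_one_comm.mp hΨ
  have hx : Ψ.mulVec c = x := by
    rw [hc, Matrix.mulVec_mulVec, hΨΨt, Matrix.one_mulVec]
  have hdc : ∀ k, d k = c k + n k := by
    intro k
    simp [hd, hn, Matrix.mulVec_add, hc]
  have hnoise : ∀ k, |n k| ≤ ε * M := by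
    intro k
    have hnk : n k = ∑ i, Ψ i k * e i := by
      simp [hn, Matrix.mulVec, dotProduct, Matrix.transpose_apply]
    rw [hnk]
    calc |∑ i, Ψ i k * e i| ≤ ∑ i, |Ψ i k * e i| := Finset.abs_sum_le_sum_abs _ _
      _ = ∑ i, |Ψ i k| * |e i| := by simp [abs_mul]
      _ ≤ ∑ i, |Ψ i k| * ε := by
          exact Finset.sum_le_sum fun i _ =>
            mul_le_mul_of_nonneg_left (he i) (abs_nonneg _)
      _ = (∑ i, |Ψ i k|) * ε := by rw [← Finset.sum_mul]
      _ ≤ M * ε := mul_le_mul_of_nonneg_right (hM k) hε.le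
      _ = ε * M := mul_comm _ _
  have hεM : 0 ≤ ε * M := le_trans (abs_nonneg _) (hnoise ⟨0, hN⟩)
  have hsub : ∀ j, c j ≠ 0 → j ∈ S := by
    intro j hj
    by_contra hjS
    obtain ⟨i, hiS, hci⟩ : ∃ i ∈ S, c i = 0 := by
      by_contra h
      push_neg at h
      have hT : ({j | c j ≠ 0} : Set (Fin N)).ncard
          = (Finset.univ.filter fun j => c j ≠ 0).card := by
        rw [← Set.ncard_coe_finset]; congr 1; ext a; simp
      have hins : insert j S ⊆ Finset.univ.filter fun j => c j ≠ 0 := by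
        intro a ha
        rcases Finset.mem_insert.mp ha with rfl | ha
        · simp [hj]
        · simp [h a ha]
      have hcard := Finset.card_le_card hins
      rw [Finset.card_insert_of_notMem hjS, hK] at hcard
      rw [hT] at hsupp
      omega
    have h1 := htop i hiS j hjS
    have hcj : |c j| ≤ |d j| + |n j| := by
      have hcd : c j = d j - n j := by rw [hdc]; ring
      rw [hcd, sub_eq_add_neg]
      exact (abs_add_le _ _).trans (by rw [abs_neg])
    have hdi : |d i| ≤ ε * M := by
      rw [hdc i, hci, zero_add]; exact hnoise i
    have := hlam j hj
    have := hnoise j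
    linarith
  set v : Fin N → ℝ := (fun k => if k ∈ S then d k else 0) - c with hv
  have herr : (fun i => Ψ.mulVec (fun k => if k ∈ S then d k else 0) i - x i)
      = Ψ.mulVec v := by
    funext i
    rw [hv, Matrix.mulVec_sub, hx]
    rfl
  have hiso : ∑ i, (Ψ.mulVec v i) ^ 2 = ∑ k, (v k) ^ 2 := by
    have h1 : ∑ i, (Ψ.mulVec v i) ^ 2 = Ψ.mulVec v ⬝ᵥ Ψ.mulVec v := by
      simp [dotProduct, sq]
    have h2 : Ψ.mulVec v ⬝ᵥ Ψ.mulVec v = v ⬝ᵥ v := by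
      rw [Matrix.dotProduct_mulVec, ← Matrix.mulVec_transpose,
        Matrix.mulVec_mulVec, hΨ, Matrix.one_mulVec]
    have h3 : v ⬝ᵥ v = ∑ k, (v k) ^ 2 := by
      simp [dotProduct, sq]
    rw [h1, h2, h3]
  have hbound : ∑ k, (v k) ^ 2 ≤ (K : ℝ) * (ε * M) ^ 2 := by
    have hvk : ∀ k, (v k) ^ 2 ≤ if k ∈ S then (ε * M) ^ 2 else 0 := by
      intro k
      by_cases hk : k ∈ S
      · simp only [hk, if_pos]
        have hveq : v k = n k := by
          simp [hv, hk, hdc k]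
        rw [hveq, ← sq_abs]
        exact pow_le_pow_left₀ (abs_nonneg _) (hnoise k) 2
      · have hck : c k = 0 := by
          by_contra h
          exact hk (hsub k h)
        simp [hv, hk, hck]
    calc ∑ k, (v k) ^ 2 ≤ ∑ k, if k ∈ S then (ε * M) ^ 2 else 0 :=
          Finset.sum_le_sum fun k _ => hvk k
      _ = S.card * (ε * M) ^ 2 := by
          rw [Finset.sum_ite_mem, Finset.univ_inter, Finset.sum_const, nsmul_eq_mul]
      _ = (K : ℝ) * (ε * M) ^ 2 := by rw [hK]
  calc Real.sqrt (∑ i,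
        (Ψ.mulVec (fun k => if k ∈ S then Ψᵀ.mulVec (x + e) k else 0) i - x i) ^ 2)
      = Real.sqrt (∑ i, (Ψ.mulVec v i) ^ 2) := by
        congr 1
        refine Finset.sum_congr rfl fun i _ => ?_
        rw [← congrFun herr i]
    _ = Real.sqrt (∑ k, (v k) ^ 2) := by rw [hiso]
    _ ≤ Real.sqrt ((K : ℝ) * (ε * M) ^ 2) := Real.sqrt_le_sqrt hbound
    _ = Real.sqrt K * (ε * M) := by
        rw [Real.sqrt_mul (Nat.cast_nonneg K), Real.sqrt_sq hεM]
end
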